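/- A Banach space X is not reflexive if and only if there exist θ ∈ (0,1) and a sequence (x_i) in the closed unit ball of X such that for every n, the distance between the convex hull of {x₁,…,xₙ} and the convex hull of {x_{n+1}, x_{n+2},…} is at least θ. -/

import Mathlib

open Metric Set Filter Topology

section helly
variable {E : Type*} [NormedAddCommGroup E] [NormedSpace ℝ E]

/-- Helly's theorem: solvability of a finite system of linear equations with norm control. -/
lemma helly_system {ι : Type*} [Fintype ι] (f : ι → E →L[ℝ] ℝ) (c : ι → ℝ) (M : ℝ) (hM : 0 ≤ M)
    (h : ∀ a : ι → ℝ, |∑ i, a i * c i| ≤ M * ‖∑ i, a i • f i‖) {ε : ℝ} (hε : 0 < ε) :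
    ∃ x : E, ‖x‖ < M + ε ∧ ∀ i, f i x = c i := by
  classical
  -- Step 1: some `x₀` solves the system.
  set T : E →ₗ[ℝ] (ι → ℝ) := LinearMap.pi (fun i => (f i : E →ₗ[ℝ] ℝ)) with hT
  have hex : ∃ x₀ : E, ∀ i, f i x₀ = c i := by
    have hc : c ∈ LinearMap.range T := by
      by_contra hc
      set p := LinearMap.range T with hp
      have hq : Submodule.Quotient.mk c ≠ (0 : (ι → ℝ) ⧸ p) := by
        simpa [Submodule.Quotient.mk_eq_zero] using hc
      have : ∃ ψ : Module.Dual ℝ ((ι → ℝ) ⧸ p), ψ (Submodule.Quotient.mk c) ≠ 0 := by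
        by_contra h'
        push_neg at h'
        exact hq ((Module.forall_dual_apply_eq_zero_iff ℝ _).1 h')
      obtain ⟨ψ, hψ⟩ := this
      set φ : Module.Dual ℝ (ι → ℝ) := ψ.comp p.mkQ with hφdef
      set a : ι → ℝ := fun i => φ (Pi.single i (1:ℝ)) with ha
      have hφ : ∀ v : ι → ℝ, φ v = ∑ i, v i * a i := by
        intro v
        conv_lhs => rw [← Finset.univ_sum_single v]
        rw [map_sum]
        refine Finset.sum_congr rfl fun i _ => ?_
        have h1 : Pi.single i (v i) = v i • (Pi.single i (1:ℝ) : ι → ℝ) := by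
          ext j
          rcases eq_or_ne j i with rfl | hne
          · simp
          · simp [Pi.single_eq_of_ne hne]
        rw [h1, map_smul, smul_eq_mul]
      have hzero : (∑ i, a i • f i) = (0 : E →L[ℝ] ℝ) := by
        ext y
        have hmem : T y ∈ p := ⟨y, rfl⟩
        have h0 : φ (T y) = 0 := by
          have : p.mkQ (T y) = 0 := (Submodule.Quotient.mk_eq_zero p).2 hmem
          simp only [hφdef, LinearMap.comp_apply, this, map_zero]
        rw [hφ] at h0
        have hTy : ∀ i, T y i = f i y := fun i => rfl
        simp only [hTy] at h0
        simpa [ContinuousLinearMap.sum_apply, mul_comm] using h0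
      have hle := h a
      rw [hzero, norm_zero, mul_zero, abs_nonpos_iff] at hle
      have : φ c = 0 := by
        rw [hφ c, ← hle]
        exact Finset.sum_congr rfl fun i _ => mul_comm _ _
      exact hψ this
    obtain ⟨x₀, hx₀⟩ := hc
    exact ⟨x₀, fun i => congrFun hx₀ i⟩
  obtain ⟨x₀, hx₀⟩ := hex
  -- Step 2: the common kernel.
  set p : Submodule ℝ E := ⨅ i, LinearMap.ker (f i : E →ₗ[ℝ] ℝ) with hpdef
  have hpmem : ∀ {y}, y ∈ p → ∀ i, f i y = 0 := by
    intro y hy i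
    exact (Submodule.mem_iInf _).1 hy i
  have hclosed : IsClosed (p : Set E) := by
    have : (p : Set E) = ⋂ i, (LinearMap.ker (f i : E →ₗ[ℝ] ℝ) : Set E) := by
      simp [hpdef, Submodule.coe_iInf]
    rw [this]
    exact isClosed_iInter fun i => ContinuousLinearMap.isClosed_ker (f i)
  have hpne : (p : Set E).Nonempty := ⟨0, Submodule.zero_mem p⟩
  -- Step 3: the distance bound.
  have hdist : infDist x₀ (p : Set E) ≤ M := by
    by_contra hlt
    push_neg at hlt
    haveI : IsClosed (p : Set E) := hclosed
    have hnorm : ‖(Submodule.Quotient.mk x₀ : E ⧸ p)‖ = infDist x₀ (p : Set E) :=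
      QuotientAddGroup.norm_mk (S := p.toAddSubgroup) x₀
    have hne0 : (Submodule.Quotient.mk x₀ : E ⧸ p) ≠ 0 := by
      rw [← norm_ne_zero_iff, hnorm]
      exact ne_of_gt (lt_of_le_of_lt hM hlt)
    obtain ⟨g, hg1, hgx⟩ := exists_dual_vector ℝ (Submodule.Quotient.mk x₀ : E ⧸ p) (norm_ne_zero_iff.2 hne0)
    set K : E →L[ℝ] ℝ := LinearMap.mkContinuous
      ((g : (E ⧸ p) →ₗ[ℝ] ℝ).comp p.mkQ) 1 (fun y => by
        simp only [LinearMap.comp_apply, ContinuousLinearMap.coe_coe, Submodule.mkQ_apply]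
        calc ‖g (Submodule.Quotient.mk y)‖ ≤ ‖g‖ * ‖(Submodule.Quotient.mk y : E ⧸ p)‖ :=
              g.le_opNorm _
          _ ≤ 1 * ‖y‖ := by
              rw [hg1]
              exact mul_le_mul_of_nonneg_left (Submodule.Quotient.norm_mk_le p y) zero_le_one) with hK
    have hKnorm : ‖K‖ ≤ 1 := LinearMap.mkContinuous_norm_le _ zero_le_one _
    have hKx₀ : K x₀ = ‖(Submodule.Quotient.mk x₀ : E ⧸ p)‖ := by
      simp only [hK, LinearMap.mkContinuous_apply, LinearMap.comp_apply,
        ContinuousLinearMap.coe_coe, Submodule.mkQ_apply]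
      rw [hgx]
      norm_num
    have hker : (⨅ i, LinearMap.ker ((f i : E →ₗ[ℝ] ℝ))) ≤ LinearMap.ker (K : E →ₗ[ℝ] ℝ) := by
      intro y hy
      have : p.mkQ y = 0 := (Submodule.Quotient.mk_eq_zero p).2 hy
      simp only [LinearMap.mem_ker, ContinuousLinearMap.coe_coe, hK,
        LinearMap.mkContinuous_apply, LinearMap.comp_apply, this, map_zero]
    have hspan := mem_span_of_iInf_ker_le_ker hker
    rw [Submodule.mem_span_range_iff_exists_fun] at hspan
    obtain ⟨a, hasum⟩ := hspan
    have hsum : (∑ i, a i • f i) = K := by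
      ext y
      have := LinearMap.congr_fun hasum y
      simpa [ContinuousLinearMap.sum_apply] using this
    have hle := h a
    rw [hsum] at hle
    have h1 : |∑ i, a i * c i| ≤ M := le_trans hle (by
      calc M * ‖K‖ ≤ M * 1 := mul_le_mul_of_nonneg_left hKnorm hM
        _ = M := mul_one M)
    have h2 : (∑ i, a i * c i) = K x₀ := by
      have := LinearMap.congr_fun hasum x₀
      simp only [LinearMap.coe_sum, Finset.sum_apply, LinearMap.smul_apply,
        ContinuousLinearMap.coe_coe, smul_eq_mul] at this
      rw [← this]
      exact Finset.sum_congr rfl fun i _ => by rw [hx₀ i]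
    rw [h2, hKx₀, hnorm] at h1
    exact absurd (le_trans (le_abs_self _) h1) (not_le.2 hlt)
  -- Step 4: conclude.
  have : infDist x₀ (p : Set E) < M + ε := lt_of_le_of_lt hdist (by linarith)
  rw [infDist_lt_iff hpne] at this
  obtain ⟨y, hyp, hy⟩ := this
  refine ⟨x₀ - y, ?_, fun i => ?_⟩
  · rw [← dist_eq_norm]
    exact hy
  · rw [map_sub, hx₀ i, hpmem hyp i, sub_zero]

end helly

section james
variable {X : Type*} [NormedAddCommGroup X] [NormedSpace ℝ X] [CompleteSpace X]

open NormedSpace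

/-- One extension step of James's construction. -/
lemma james_extend (F : StrongDual ℝ (StrongDual ℝ X)) (θ : ℝ) (hθpos : 0 < θ) (hFnorm : ‖F‖ ≤ 1/2)
    (hFdist : ∀ y : X, 2*θ ≤ ‖F - inclusionInDoubleDual ℝ X y‖)
    (s : Finset (X × StrongDual ℝ X)) (hs : ∀ p ∈ s, F p.2 = θ) :
    ∃ q : X × StrongDual ℝ X, (‖q.1‖ ≤ 1 ∧ ‖q.2‖ ≤ 1 ∧ F q.2 = θ ∧ q.2 q.1 = θ) ∧
      ∀ p ∈ s, q.2 p.1 = 0 ∧ p.2 q.1 = θ := by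
  set J := inclusionInDoubleDual ℝ X with hJ
  -- Step A: the new functional.
  obtain ⟨fn, hfn_norm, hfn_eq⟩ :
      ∃ fn : StrongDual ℝ X, ‖fn‖ < 1/2 + 1/2 ∧
        ∀ o : Option ↥s, (o.elim F (fun p => J (p : X × StrongDual ℝ X).1)) fn
          = o.elim θ (fun _ => 0) := by
    apply helly_system (fun o : Option ↥s => o.elim F (fun p => J (p : X × StrongDual ℝ X).1))
      (fun o => o.elim θ (fun _ => 0)) (1/2) (by norm_num) ?_ (by norm_num)
    intro a
    rw [Fintype.sum_option, Fintype.sum_option]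
    simp only [Option.elim_none, Option.elim_some, mul_zero, Finset.sum_const_zero, add_zero]
    set an := a none with han
    rcases eq_or_ne an 0 with h0 | h0
    · rw [h0, zero_mul, abs_zero]
      positivity
    · set w : X := -(an⁻¹) • ∑ p : ↥s, a (some p) • (p : X × StrongDual ℝ X).1 with hw
      have hJw : an • F + ∑ p : ↥s, a (some p) • J (p : X × StrongDual ℝ X).1
          = an • (F - J w) := by
        rw [show an • (F - J w) = an • F - an • J w from smul_sub an F (J w), hw, map_smul, map_sum]
        have : ∀ p : ↥s, J (a (some p) • (p : X × StrongDual ℝ X).1)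
            = a (some p) • J (p : X × StrongDual ℝ X).1 := fun p => map_smul J _ _
        simp only [this]
        rw [smul_smul]
        field_simp
        module
      rw [hJw]
      have h2θ : 2*θ ≤ ‖F - J w‖ := hFdist w
      have : |an * θ| = |an| * θ := by
        rw [abs_mul, abs_of_pos hθpos]
      rw [this]
      have han0 : (0:ℝ) < |an| := abs_pos.2 h0
      calc |an| * θ = (1/2) * (|an| * (2*θ)) := by ring
        _ ≤ (1/2) * (|an| * ‖F - J w‖) := by
            apply mul_le_mul_of_nonneg_left _ (by norm_num)
            exact mul_le_mul_of_nonneg_left h2θ han0.le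
        _ = 1/2 * (‖an‖ * ‖F - J w‖) := by rw [Real.norm_eq_abs]
        _ = 1/2 * ‖an • (F - J w)‖ := by rw [(NormedSpace.toNormSMulClass).norm_smul an (F - J w)]
  have hFfn : F fn = θ := hfn_eq none
  have hfn0 : ∀ p ∈ s, fn p.1 = 0 := by
    intro p hp
    have := hfn_eq (some ⟨p, hp⟩)
    simpa [hJ, dual_def] using this
  -- Step B: the new vector.
  obtain ⟨xn, hxn_norm, hxn_eq⟩ :
      ∃ xn : X, ‖xn‖ < 1/2 + 1/2 ∧
        ∀ o : Option ↥s, (o.elim fn (fun p => (p : X × StrongDual ℝ X).2)) xn = θ := by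
    apply helly_system (fun o : Option ↥s => o.elim fn (fun p => (p : X × StrongDual ℝ X).2))
      (fun _ => θ) (1/2) (by norm_num) ?_ (by norm_num)
    intro a
    have hFg : ∀ o : Option ↥s, F (o.elim fn (fun p => (p : X × StrongDual ℝ X).2)) = θ := by
      rintro (_ | p)
      · exact hFfn
      · exact hs (p : X × StrongDual ℝ X) p.2
    have key : (∑ o : Option ↥s, a o * θ)
        = F (∑ o : Option ↥s, a o • (o.elim fn (fun p => (p : X × StrongDual ℝ X).2))) := by
      rw [map_sum]
      refine Finset.sum_congr rfl fun o _ => ?_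
      rw [map_smul, hFg o, smul_eq_mul]
    rw [key]
    calc |F (∑ o : Option ↥s, a o • (o.elim fn (fun p => (p : X × StrongDual ℝ X).2)))|
        ≤ ‖F‖ * ‖∑ o : Option ↥s, a o • (o.elim fn (fun p => (p : X × StrongDual ℝ X).2))‖ :=
          F.le_opNorm _
      _ ≤ (1/2) * ‖∑ o : Option ↥s, a o • (o.elim fn (fun p => (p : X × StrongDual ℝ X).2))‖ :=
          mul_le_mul_of_nonneg_right hFnorm (norm_nonneg _)
  refine ⟨(xn, fn), ⟨le_trans hxn_norm.le (by norm_num), le_trans hfn_norm.le (by norm_num), hFfn, ?_⟩, ?_⟩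
  · exact hxn_eq none
  · intro p hp
    exact ⟨hfn0 p hp, hxn_eq (some ⟨p, hp⟩)⟩

end james

/-- A Banach space is non-reflexive iff there is `θ ∈ (0,1)` and a sequence in the closed
unit ball whose initial and tail convex hulls stay `θ`-separated. -/
theorem nonreflexive_iff_separated_convex_hulls {X : Type*} [NormedAddCommGroup X]
    [NormedSpace ℝ X] [CompleteSpace X] :
    ¬ Function.Surjective (NormedSpace.inclusionInDoubleDual ℝ X) ↔
    ∃ θ ∈ Set.Ioo (0:ℝ) 1, ∃ x : ℕ → X, (∀ i, ‖x i‖ ≤ 1) ∧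
      ∀ n : ℕ, ∀ a ∈ convexHull ℝ (x '' {i | i ≤ n}),
        ∀ b ∈ convexHull ℝ (x '' {i | n < i}), θ ≤ ‖a - b‖ := by
  set J := NormedSpace.inclusionInDoubleDual ℝ X with hJdef
  constructor
  · -- Forward: non-reflexive ⇒ James sequence
    intro hJ
    rw [Function.Surjective] at hJ
    push_neg at hJ
    obtain ⟨F₀, hF₀⟩ := hJ
    have hF₀R : F₀ ∉ Set.range (J : X → StrongDual ℝ (StrongDual ℝ X)) := by
      rintro ⟨y, rfl⟩
      exact hF₀ y rfl
    have hRclosed : IsClosed (Set.range (J : X → StrongDual ℝ (StrongDual ℝ X))) := by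
      have h1 : Set.range (J : X → StrongDual ℝ (StrongDual ℝ X))
          = Set.range (NormedSpace.inclusionInDoubleDualLi ℝ (E := X)) := rfl
      rw [h1]
      have h := ((NormedSpace.inclusionInDoubleDualLi ℝ (E := X)).isometry.antilipschitz.isComplete_range
        (NormedSpace.inclusionInDoubleDualLi ℝ (E := X)).isometry.uniformContinuous)
      exact h.isClosed
    have hF₀0 : F₀ ≠ 0 := by
      rintro rfl
      exact hF₀R ⟨0, map_zero J⟩
    have hF₀pos : (0:ℝ) < ‖F₀‖ := (norm_pos_iff (a := F₀)).2 hF₀0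
    set F : StrongDual ℝ (StrongDual ℝ X) := (2*‖F₀‖)⁻¹ • F₀ with hF
    have hFnorm : ‖F‖ = 1/2 := by
      rw [hF, (NormedSpace.toNormSMulClass).norm_smul (2*‖F₀‖)⁻¹ F₀, Real.norm_eq_abs, abs_inv, abs_of_pos (by positivity)]
      field_simp
    have hFR : F ∉ Set.range (J : X → StrongDual ℝ (StrongDual ℝ X)) := by
      rintro ⟨y, hy⟩
      apply hF₀ ((2*‖F₀‖) • y)
      rw [map_smul, hy, hF, smul_smul]
      rw [mul_inv_cancel₀ (by positivity), one_smul]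
    have hRne : (Set.range (J : X → StrongDual ℝ (StrongDual ℝ X))).Nonempty :=
      ⟨J 0, Set.mem_range_self 0⟩
    set dF := infDist F (Set.range (J : X → StrongDual ℝ (StrongDual ℝ X))) with hdF
    have hdFpos : 0 < dF := (hRclosed.notMem_iff_infDist_pos hRne).1 hFR
    set θ := dF/2 with hθ
    have hθpos : 0 < θ := by positivity
    have hdF4 : dF ≤ 1/2 := by
      have h1 : dF ≤ dist F (J 0) := infDist_le_dist_of_mem (Set.mem_range_self 0)
      rw [map_zero, dist_zero_right F, hFnorm] at h1
      exact h1
    have hθ1 : θ < 1 := by rw [hθ]; linarith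
    have hFdist : ∀ y : X, 2*θ ≤ ‖F - J y‖ := by
      intro y
      have h1 : dF ≤ dist F (J y) := infDist_le_dist_of_mem (Set.mem_range_self y)
      rw [dist_eq_norm F (J y)] at h1
      rw [hθ]
      linarith
    obtain ⟨seq, hP, hr⟩ := exists_seq_of_forall_finset_exists
      (fun p : X × StrongDual ℝ X => ‖p.1‖ ≤ 1 ∧ ‖p.2‖ ≤ 1 ∧ F p.2 = θ ∧ p.2 p.1 = θ)
      (fun p q => q.2 p.1 = 0 ∧ p.2 q.1 = θ)
      (fun s hs => james_extend F θ hθpos hFnorm.le hFdist s (fun p hp => (hs p hp).2.2.1))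
    refine ⟨θ, ⟨hθpos, hθ1⟩, fun n => (seq n).1, fun i => (hP i).1, ?_⟩
    intro n a ha b hb
    set φ := (seq (n+1)).2 with hφ
    have hA : ∀ y ∈ (fun i => (seq i).1) '' {i | i ≤ n}, φ y = 0 := by
      rintro y ⟨i, hi, rfl⟩
      exact (hr i (n+1) (Nat.lt_succ_of_le hi)).1
    have hB : ∀ y ∈ (fun i => (seq i).1) '' {i | n < i}, φ y = θ := by
      rintro y ⟨j, hj, rfl⟩
      rcases eq_or_lt_of_le (Nat.succ_le_of_lt hj) with h | h
      · subst h
        exact (hP _).2.2.2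
      · exact (hr (n+1) j h).2
    have haφ : φ a = 0 := by
      have hconv : Convex ℝ {y : X | φ y = 0} := convex_hyperplane (f := ⇑φ) ⟨φ.map_add, φ.map_smul⟩ 0
      exact convexHull_min hA hconv ha
    have hbφ : φ b = θ := by
      have hconv : Convex ℝ {y : X | φ y = θ} := convex_hyperplane (f := ⇑φ) ⟨φ.map_add, φ.map_smul⟩ θ
      exact convexHull_min hB hconv hb
    have h1 : θ = φ (b - a) := by rw [map_sub, hbφ, haφ, sub_zero]
    have h2 : φ (b - a) ≤ ‖φ‖ * ‖b - a‖ :=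
      le_trans (le_abs_self _) (φ.le_opNorm _)
    have h3 : ‖φ‖ * ‖b - a‖ ≤ 1 * ‖b - a‖ :=
      mul_le_mul_of_nonneg_right (hP (n+1)).2.1 (norm_nonneg _)
    have h4 : ‖b - a‖ = ‖a - b‖ := norm_sub_rev _ _
    linarith
  · -- Backward: James sequence ⇒ non-reflexive
    rintro ⟨θ, ⟨hθ0, hθ1⟩, x, hx, hsep⟩ hsurj
    set U : Ultrafilter ℕ := Ultrafilter.of atTop with hUdef
    have hUle : (U : Filter ℕ) ≤ atTop := Ultrafilter.of_le atTop
    have hlim : ∀ f : StrongDual ℝ X, ∃ c : ℝ, c ∈ Icc (-‖f‖) ‖f‖ ∧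
        Tendsto (fun n => f (x n)) (U : Filter ℕ) (𝓝 c) := by
      intro f
      have hmem : ∀ n, f (x n) ∈ Icc (-‖f‖) ‖f‖ := by
        intro n
        have h1 : ‖f (x n)‖ ≤ ‖f‖ * ‖x n‖ := f.le_opNorm _
        have h2 : ‖f‖ * ‖x n‖ ≤ ‖f‖ * 1 := mul_le_mul_of_nonneg_left (hx n) (norm_nonneg f)
        rw [Real.norm_eq_abs] at h1
        have : |f (x n)| ≤ ‖f‖ := by linarith
        exact abs_le.1 this
      have hle : (U.map (fun n => f (x n)) : Filter ℝ) ≤ 𝓟 (Icc (-‖f‖) ‖f‖) := by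
        rw [le_principal_iff]
        rw [Ultrafilter.coe_map, mem_map]
        filter_upwards [Filter.univ_mem] with n _ using hmem n
      obtain ⟨c, hc, hconv⟩ := (isCompact_Icc).ultrafilter_le_nhds (U.map (fun n => f (x n))) hle
      exact ⟨c, hc, hconv⟩
    choose φ hφmem hφtend using hlim
    have hadd : ∀ f g : StrongDual ℝ X, φ (f + g) = φ f + φ g := by
      intro f g
      refine tendsto_nhds_unique (f := fun n => f (x n) + g (x n)) (l := (U : Filter ℕ)) ?_ ?_
      · have := hφtend (f + g)
        simpa [ContinuousLinearMap.add_apply] using this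
      · exact (hφtend f).add (hφtend g)
    have hsmul : ∀ (c : ℝ) (f : StrongDual ℝ X), φ (c • f) = c * φ f := by
      intro c f
      refine tendsto_nhds_unique (f := fun n => c * f (x n)) (l := (U : Filter ℕ)) ?_ ?_
      · have := hφtend (c • f)
        simpa [ContinuousLinearMap.smul_apply, smul_eq_mul] using this
      · exact (hφtend f).const_mul c
    set F : StrongDual ℝ (StrongDual ℝ X) := LinearMap.mkContinuous
      { toFun := φ, map_add' := hadd, map_smul' := fun c f => by simpa using hsmul c f } 1
      (fun f => by
        have h1 := (hφmem f).1
        have h2 := (hφmem f).2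
        rw [Real.norm_eq_abs, one_mul]
        exact abs_le.2 ⟨h1, h2⟩) with hFdef
    obtain ⟨b, hbF⟩ := hsurj F
    have hkey : ∀ f : StrongDual ℝ X, Tendsto (fun n => f (x n)) (U : Filter ℕ) (𝓝 (f b)) := by
      intro f
      have h2 : f b = φ f := by
        have h3 : J b f = F f := congrFun (congrArg DFunLike.coe hbF) f
        have h4 : J b f = f b := NormedSpace.dual_def ℝ X b f
        rw [← h4, h3]
        rfl
      rw [h2]
      exact hφtend f
    have hmemC : ∀ C : Set X, Convex ℝ C → IsClosed C →
        (∀ᶠ n in (U : Filter ℕ), x n ∈ C) → b ∈ C := by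
      intro C hconv hclosed hev
      by_contra hbC
      obtain ⟨f, u, hfu, hub⟩ := geometric_hahn_banach_closed_point hconv hclosed hbC
      have h1 : ∀ᶠ n in (U : Filter ℕ), f (x n) ≤ u := hev.mono fun n hn => (hfu _ hn).le
      have h2 : f b ≤ u := le_of_tendsto (hkey f) h1
      linarith
    have hCn : ∀ n, b ∈ closure (convexHull ℝ (x '' {i | n < i})) := by
      intro n
      refine hmemC _ ((convex_convexHull ℝ _).closure) isClosed_closure ?_
      have hev : ∀ᶠ m in (atTop : Filter ℕ), x m ∈ closure (convexHull ℝ (x '' {i | n < i})) := by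
        filter_upwards [Filter.eventually_ge_atTop (n+1)] with m hm
        exact subset_closure (subset_convexHull ℝ _ ⟨m, hm, rfl⟩)
      exact hev.filter_mono hUle
    have hD : b ∈ closure (convexHull ℝ (Set.range x)) := by
      refine hmemC _ ((convex_convexHull ℝ _).closure) isClosed_closure ?_
      exact Filter.Eventually.of_forall fun n =>
        subset_closure (subset_convexHull ℝ _ (Set.mem_range_self n))
    obtain ⟨a, haD, hab⟩ := Metric.mem_closure_iff.1 hD (θ/2) (by linarith)
    have hfin : ∃ n, a ∈ convexHull ℝ (x '' {i | i ≤ n}) := by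
      rw [convexHull_eq_union_convexHull_finite_subsets] at haD
      simp only [mem_iUnion] at haD
      obtain ⟨t, ht, hat⟩ := haD
      have hsel : ∀ y ∈ t, ∃ i, x i = y := fun y hy => ht hy
      choose g hg using hsel
      refine ⟨t.attach.sup (fun y => g y.1 y.2), ?_⟩
      refine convexHull_mono ?_ hat
      intro y hy
      exact ⟨g y hy, Finset.le_sup (f := fun y : ↥t => g y.1 y.2) (Finset.mem_attach t ⟨y, hy⟩), hg y hy⟩
    obtain ⟨n, han⟩ := hfin
    obtain ⟨b', hb', hbb'⟩ := Metric.mem_closure_iff.1 (hCn n) (θ/2) (by linarith)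
    have hsep' := hsep n a han b' hb'
    have h1 : dist a b' ≤ dist a b + dist b b' := dist_triangle a b b'
    rw [dist_eq_norm] at h1
    rw [dist_comm] at hab
    linarith
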